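/- Let γ be a Hermitian matrix on ℂ^{2M} and S̃^γ the matrix S̃^γ_{mn} = −½ tr([γ, δ_m][γ, δ_n]) = Σ_{σ,σ'} |γ_{mσ,nσ'}|². Say γ is irreducible if for every nonempty proper subset J ⊂ {1,...,M}, the projection 1_J = Σ_{m∈J} δ_m does not commute with γ. Then γ is irreducible if and only if the kernel of S̃^γ equals the span of the all-ones vector (1,...,1). -/
import Mathlib


open Matrix Complex

/-- Irreducibility criterion: `γ` is irreducible (no nontrivial site subset
projection commutes with it) iff the kernel of `S̃^γ` is exactly the span of the
all-ones vector. -/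
theorem irreducible_iff_kernel_ones {M : ℕ}
    (γ : Matrix (Fin M × Fin 2) (Fin M × Fin 2) ℂ) (hγ : γ.IsHermitian) :
    let δ : Fin M → Matrix (Fin M × Fin 2) (Fin M × Fin 2) ℂ :=
      fun m => Matrix.of fun i j => if i = j ∧ i.1 = m then 1 else 0
    let S : Matrix (Fin M) (Fin M) ℝ :=
      Matrix.of fun m n =>
        (-(1/2 : ℂ) * ((γ * δ m - δ m * γ) * (γ * δ n - δ n * γ)).trace).re
    ((∀ J : Finset (Fin M), J.Nonempty → J ≠ Finset.univ →
        (∑ m ∈ J, δ m) * γ ≠ γ * (∑ m ∈ J, δ m)) ↔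
      {v : Fin M → ℝ | S *ᵥ v = 0} = {v : Fin M → ℝ | ∃ c : ℝ, v = fun _ => c}) := by
  intro δ S
  set w : Fin M → Fin M → ℝ :=
    fun m n => ∑ σ : Fin 2, ∑ σ' : Fin 2, Complex.normSq (γ (m,σ) (n,σ')) with hwdef
  -- entries of the commutators
  have hC : ∀ (m : Fin M) (i j : Fin M × Fin 2),
      (γ * δ m - δ m * γ) i j =
        γ i j * ((if j.1 = m then 1 else 0) - (if i.1 = m then 1 else 0)) := by
    intro m i j
    simp only [δ, Matrix.sub_apply, Matrix.mul_apply, Matrix.of_apply, ite_and, mul_ite, mul_one,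
      mul_zero, ite_mul, one_mul, zero_mul]
    rw [Finset.sum_ite_eq' Finset.univ j, Finset.sum_ite_eq Finset.univ i]
    simp [mul_sub]
  have hγapp : ∀ i j, γ j i = (starRingEnd ℂ) (γ i j) := by
    intro i j
    rw [← congrFun (congrFun hγ j) i, Matrix.conjTranspose_apply, Complex.star_def]
  have hwsymm : ∀ m n, w m n = w n m := by
    intro m n
    simp only [hwdef]
    rw [Finset.sum_comm]
    refine Finset.sum_congr rfl fun σ' _ => Finset.sum_congr rfl fun σ _ => ?_
    rw [hγapp (n,σ') (m,σ)]
    simp [Complex.normSq_conj]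
  have hwnn : ∀ m n, 0 ≤ w m n := by
    intro m n
    exact Finset.sum_nonneg fun _ _ => Finset.sum_nonneg fun _ _ => Complex.normSq_nonneg _
  have hwzero : ∀ m n, w m n = 0 ↔ ∀ σ σ', γ (m,σ) (n,σ') = 0 := by
    intro m n
    constructor
    · intro h σ σ'
      have h1 := (Finset.sum_eq_zero_iff_of_nonneg
        (fun s _ => Finset.sum_nonneg fun s' _ => Complex.normSq_nonneg _)).mp h σ
        (Finset.mem_univ σ)
      have h2 := (Finset.sum_eq_zero_iff_of_nonneg
        (fun s' _ => Complex.normSq_nonneg _)).mp h1 σ' (Finset.mem_univ σ')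
      exact Complex.normSq_eq_zero.mp h2
    · intro h
      simp only [hwdef]
      exact Finset.sum_eq_zero fun σ _ => Finset.sum_eq_zero fun σ' _ => by
        rw [h σ σ']; simp
  -- the trace formula
  have htr : ∀ m n : Fin M, ((γ * δ m - δ m * γ) * (γ * δ n - δ n * γ)).trace
      = ∑ i, ∑ j, ((Complex.normSq (γ i j) *
          ((((if j.1 = m then (1:ℝ) else 0) - (if i.1 = m then 1 else 0)) *
            ((if i.1 = n then (1:ℝ) else 0) - (if j.1 = n then 1 else 0)))) : ℝ) : ℂ) := by
    intro m n
    rw [Matrix.trace]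
    simp only [Matrix.diag_apply, Matrix.mul_apply]
    refine Finset.sum_congr rfl fun i _ => Finset.sum_congr rfl fun j _ => ?_
    rw [hC m i j, hC n j i, hγapp i j]
    rw [show γ i j * ((if j.1 = m then (1:ℂ) else 0) - if i.1 = m then 1 else 0) *
        ((starRingEnd ℂ) (γ i j) * ((if i.1 = n then (1:ℂ) else 0) - if j.1 = n then 1 else 0))
        = (γ i j * (starRingEnd ℂ) (γ i j)) *
          (((if j.1 = m then (1:ℂ) else 0) - if i.1 = m then 1 else 0) *
           ((if i.1 = n then (1:ℂ) else 0) - if j.1 = n then 1 else 0)) from by ring]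
    rw [Complex.mul_conj]
    push_cast [apply_ite (Complex.ofReal)]
    ring
  -- entries of S
  have hcast : ∀ (f : (Fin M × Fin 2) → (Fin M × Fin 2) → ℝ),
      (∑ i, ∑ j, ((f i j : ℝ) : ℂ)) = ((∑ i, ∑ j, f i j : ℝ) : ℂ) := by
    intro f; push_cast; rfl
  have hre : ∀ r : ℝ, (-(1/2:ℂ) * (r:ℂ)).re = -(1/2) * r := by intro r; simp
  have hS : ∀ m n, S m n = (if m = n then ∑ k, w m k else 0) - w m n := by
    intro m n
    show (-(1/2 : ℂ) * ((γ * δ m - δ m * γ) * (γ * δ n - δ n * γ)).trace).re = _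
    rw [htr m n, hcast, hre]
    have step1 : ∑ i : Fin M × Fin 2, ∑ j : Fin M × Fin 2, (Complex.normSq (γ i j) *
            ((((if j.1 = m then (1:ℝ) else 0) - (if i.1 = m then 1 else 0)) *
              ((if i.1 = n then (1:ℝ) else 0) - (if j.1 = n then 1 else 0)))))
        = ∑ p : Fin M, ∑ q : Fin M, (w p q *
            ((((if q = m then (1:ℝ) else 0) - (if p = m then 1 else 0)) *
              ((if p = n then (1:ℝ) else 0) - (if q = n then 1 else 0))))) := by
      simp only [Fintype.sum_prod_type]
      refine Finset.sum_congr rfl fun p _ => ?_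
      rw [Finset.sum_comm]
      refine Finset.sum_congr rfl fun q _ => ?_
      rw [show w p q = ∑ σ : Fin 2, ∑ σ' : Fin 2, Complex.normSq (γ (p,σ) (q,σ')) from rfl,
        Finset.sum_mul]
      refine Finset.sum_congr rfl fun σ _ => ?_
      rw [Finset.sum_mul]
    rw [step1]
    by_cases hmn : m = n
    · subst hmn
      simp only [if_pos rfl]
      simp only [mul_sub, sub_mul, mul_ite, ite_mul, mul_one, mul_zero, one_mul, zero_mul,
        Finset.sum_sub_distrib, Finset.sum_ite_eq, Finset.sum_ite_eq', Finset.mem_univ, if_true,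
        Finset.sum_ite_irrel, Finset.sum_const_zero]
      ring_nf
      rw [show (∑ x, w x m) = ∑ x, w m x from Finset.sum_congr rfl fun x _ => hwsymm x m]
      ring
    · simp only [if_neg hmn]
      simp only [mul_sub, sub_mul, mul_ite, ite_mul, mul_one, mul_zero, one_mul, zero_mul,
        Finset.sum_sub_distrib, Finset.sum_ite_eq, Finset.sum_ite_eq', Finset.mem_univ, if_true,
        Finset.sum_ite_irrel, Finset.sum_const_zero]
      ring_nf
      simp only [if_neg (show ¬ n = m from fun h => hmn h.symm), hwsymm n m]
      ring
  -- action on vectors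
  have hmulvec : ∀ (v : Fin M → ℝ) (m : Fin M),
      (S *ᵥ v) m = ∑ n, w m n * (v m - v n) := by
    intro v m
    simp only [Matrix.mulVec, dotProduct]
    rw [Finset.sum_congr rfl fun n _ => by rw [hS m n]]
    simp only [sub_mul, ite_mul, zero_mul, mul_sub]
    rw [Finset.sum_sub_distrib, Finset.sum_ite_eq Finset.univ m]
    simp [Finset.sum_mul, Finset.mul_sum, mul_comm]
  -- kernel characterization
  have hker : ∀ v : Fin M → ℝ, S *ᵥ v = 0 ↔ ∀ m n, w m n ≠ 0 → v m = v n := by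
    intro v
    constructor
    · intro hv
      have hQ : ∑ m, ∑ n, w m n * (v m - v n)^2 = 0 := by
        have e2 : ∀ m n, w m n * (v m - v n)^2
            = w m n * (v m * (v m - v n)) + w n m * (v n * (v n - v m)) := by
          intro m n; rw [hwsymm m n]; ring
        have eB : ∑ m, ∑ n, w n m * (v n * (v n - v m))
            = ∑ m, ∑ n, w m n * (v m * (v m - v n)) := by
          rw [Finset.sum_comm]
        have e1 : ∑ m, ∑ n, w m n * (v m - v n)^2
            = 2 * ∑ m, v m * (S *ᵥ v) m := by
          calc ∑ m, ∑ n, w m n * (v m - v n)^2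
              = ∑ m, ∑ n, (w m n * (v m * (v m - v n)) + w n m * (v n * (v n - v m))) :=
                Finset.sum_congr rfl fun m _ => Finset.sum_congr rfl fun n _ => e2 m n
            _ = ∑ m, ∑ n, w m n * (v m * (v m - v n))
                + ∑ m, ∑ n, w n m * (v n * (v n - v m)) := by
                rw [← Finset.sum_add_distrib]
                exact Finset.sum_congr rfl fun m _ => by rw [← Finset.sum_add_distrib]
            _ = 2 * ∑ m, ∑ n, w m n * (v m * (v m - v n)) := by rw [eB]; ring
            _ = 2 * ∑ m, v m * (S *ᵥ v) m := by
                congr 1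
                refine Finset.sum_congr rfl fun m _ => ?_
                rw [hmulvec v m, Finset.mul_sum]
                exact Finset.sum_congr rfl fun n _ => by ring
        rw [e1, hv]
        simp
      intro m n hmn
      have hterm : ∀ m' n' : Fin M, 0 ≤ w m' n' * (v m' - v n')^2 :=
        fun m' n' => mul_nonneg (hwnn m' n') (sq_nonneg _)
      have h1 := (Finset.sum_eq_zero_iff_of_nonneg
        (fun m' _ => Finset.sum_nonneg (fun n' _ => hterm m' n'))).mp hQ m (Finset.mem_univ m)
      have h0 := (Finset.sum_eq_zero_iff_of_nonneg
        (fun n' _ => hterm m n')).mp h1 n (Finset.mem_univ n)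
      rcases mul_eq_zero.mp h0 with h | h
      · exact absurd h hmn
      · have := pow_eq_zero_iff (n := 2) (by norm_num) |>.mp h
        linarith
    · intro hv
      funext m
      rw [hmulvec v m]
      simp only [Pi.zero_apply]
      refine Finset.sum_eq_zero fun n _ => ?_
      by_cases h : w m n = 0
      · simp [h]
      · rw [hv m n h]; simp
  -- commutation characterization
  have hPJ : ∀ J : Finset (Fin M),
      ((∑ m ∈ J, δ m) * γ = γ * (∑ m ∈ J, δ m)) ↔
        ∀ i j, γ i j ≠ 0 → (i.1 ∈ J ↔ j.1 ∈ J) := by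
    intro J
    have hsum : ∀ i j : Fin M × Fin 2,
        (∑ m ∈ J, δ m) i j = if i = j ∧ i.1 ∈ J then 1 else 0 := by
      intro i j
      simp only [δ, Matrix.sum_apply, Matrix.of_apply, ite_and]
      by_cases h2 : i = j <;> simp [h2, Finset.sum_ite_eq]
    have hL : ∀ i j, ((∑ m ∈ J, δ m) * γ) i j = (if i.1 ∈ J then 1 else 0) * γ i j := by
      intro i j
      rw [Matrix.mul_apply, Finset.sum_congr rfl fun k _ => by rw [hsum i k]]
      simp only [ite_and, ite_mul, one_mul, zero_mul]
      simp [Finset.sum_ite_eq]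
    have hR : ∀ i j, (γ * (∑ m ∈ J, δ m)) i j = γ i j * (if j.1 ∈ J then 1 else 0) := by
      intro i j
      rw [Matrix.mul_apply, Finset.sum_congr rfl fun k _ => by rw [hsum k j]]
      simp only [ite_and, mul_ite, mul_one, mul_zero]
      simp [Finset.sum_ite_eq']
    constructor
    · intro h i j hij
      have hh := congrFun (congrFun h i) j
      rw [hL i j, hR i j] at hh
      constructor
      · intro hi
        by_contra hj
        rw [if_pos hi, if_neg hj] at hh
        simp at hh
        exact hij hh
      · intro hj
        by_contra hi
        rw [if_neg hi, if_pos hj] at hh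
        simp at hh
        exact hij hh.symm
    · intro h
      ext i j
      rw [hL i j, hR i j]
      by_cases hij : γ i j = 0
      · simp [hij]
      · have hiff := h i j hij
        by_cases hi : i.1 ∈ J
        · rw [if_pos hi, if_pos (hiff.mp hi)]; ring
        · rw [if_neg hi, if_neg (fun hj => hi (hiff.mpr hj))]; ring
  -- helper: nonzero w gives nonzero entry
  have hwne : ∀ m n, w m n ≠ 0 → ∃ σ σ', γ (m,σ) (n,σ') ≠ 0 := by
    intro m n h
    by_contra hc
    push_neg at hc
    exact h ((hwzero m n).mpr hc)
  -- main equivalence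
  constructor
  · intro hirr
    ext v
    simp only [Set.mem_setOf_eq]
    constructor
    · intro hv
      have hk := (hker v).mp hv
      by_cases hM : M = 0
      · exact ⟨0, funext fun i => absurd i.isLt (by omega)⟩
      · have hMpos : 0 < M := Nat.pos_of_ne_zero hM
        set m0 : Fin M := ⟨0, hMpos⟩
        set J : Finset (Fin M) := Finset.univ.filter (fun m => v m = v m0) with hJdef
        by_cases hJu : J = Finset.univ
        · refine ⟨v m0, funext fun m => ?_⟩
          have : m ∈ J := hJu ▸ Finset.mem_univ m
          simpa [hJdef] using this
        · exfalso
          refine hirr J ⟨m0, by simp [hJdef]⟩ hJu ?_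
          refine (hPJ J).mpr fun i j hij => ?_
          have hwij : w i.1 j.1 ≠ 0 := by
            intro h0
            exact hij (by simpa using (hwzero i.1 j.1).mp h0 i.2 j.2)
          have hvij := hk i.1 j.1 hwij
          simp only [hJdef, Finset.mem_filter, Finset.mem_univ, true_and]
          rw [hvij]
    · rintro ⟨c, rfl⟩
      exact (hker _).mpr fun m n _ => rfl
  · intro hset J hJne hJu hcomm
    have hent := (hPJ J).mp hcomm
    set v : Fin M → ℝ := fun m => if m ∈ J then 1 else 0 with hvdef
    have hv0 : S *ᵥ v = 0 := by
      refine (hker v).mpr fun m n hw => ?_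
      rcases hwne m n hw with ⟨σ, σ', hσ⟩
      have hmn := hent (m,σ) (n,σ') hσ
      simp only [hvdef]
      by_cases hm : m ∈ J
      · rw [if_pos hm, if_pos (hmn.mp hm)]
      · rw [if_neg hm, if_neg (fun hn => hm (hmn.mpr hn))]
    have hvmem : v ∈ {v : Fin M → ℝ | S *ᵥ v = 0} := hv0
    rw [hset] at hvmem
    rcases hvmem with ⟨c, hc⟩
    rcases hJne with ⟨m, hm⟩
    have hnu : ∃ n, n ∉ J := by
      by_contra h
      push_neg at h
      exact hJu (Finset.eq_univ_iff_forall.mpr h)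
    rcases hnu with ⟨n, hn⟩
    have h1 : v m = c := by rw [hc]
    have h2 : v n = c := by rw [hc]
    rw [hvdef] at h1 h2
    simp only [if_pos hm] at h1
    simp only [if_neg hn] at h2
    rw [← h1] at h2
    norm_num at h2
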